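/- Let 𝔸 be a unital Banach algebra and B:[0,1]→𝔸 a continuous map. For n≥1 and t∈[0,1] let Iₙ(t) = ∫_{0≤t₁≤⋯≤tₙ≤t} B(t₁)B(t₂)⋯B(tₙ) dt₁⋯dtₙ. Then the series u(t) = 1 + Σ_{n=1}^∞ Iₙ(t) converges absolutely for every t∈[0,1], u(0)=1, and u is differentiable on [0,1] with u'(t) = u(t)·B(t) for all t∈[0,1] (one-sided derivatives at the endpoints). In other words, the iterated-integral (Chen/Dyson) series solves the parallel-transport equation whose holonomy gives the Chen signature. -/

import Mathlib

open Set MeasureTheory intervalIntegral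

noncomputable section

namespace ChenPaper

variable {A : Type*} [NormedRing A] [NormedAlgebra ℝ A] [CompleteSpace A]

/-- The iterated (Chen/Dyson) integral
`Iₙ(t) = ∫_{0 ≤ t₁ ≤ ⋯ ≤ tₙ ≤ t} B(t₁)⋯B(tₙ) dt₁⋯dtₙ`, defined recursively by
`I₀ = 1` and `Iₙ₊₁(t) = ∫₀ᵗ Iₙ(s)·B(s) ds`. -/
def iterI (B : ℝ → A) : ℕ → ℝ → A
  | 0, _ => 1
  | (m + 1), t => ∫ s in (0:ℝ)..t, iterI B m s * B s

/-- The candidate derivative of `iterI B m`. -/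
def dIter (B : ℝ → A) : ℕ → ℝ → A
  | 0, _ => 0
  | (m + 1), t => iterI B m t * B t

/-- A summable majorant for the derivative series. -/
def dBound (K C : ℝ) : ℕ → ℝ
  | 0 => 0
  | (m + 1) => K * (C ^ m * 2 ^ m / m.factorial) * C

/-- `∫ s in 0..x, |s|^m = x * |x|^m / (m+1)` for all real `x`. -/
lemma integral_abs_pow (m : ℕ) (x : ℝ) :
    (∫ s in (0:ℝ)..x, |s| ^ m) = x * |x| ^ m / (m + 1) := by
  rcases le_or_gt 0 x with hx | hx
  · rw [intervalIntegral.integral_congr (g := fun s => s ^ m)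
      (fun s hs => by
        rw [uIcc_of_le hx] at hs
        simp [abs_of_nonneg hs.1]),
      integral_pow]
    rw [abs_of_nonneg hx]
    ring
  · rw [intervalIntegral.integral_congr (g := fun s => (-s) ^ m)
      (fun s hs => by
        rw [uIcc_of_ge hx.le] at hs
        simp [abs_of_nonpos hs.2]),
      show (fun s : ℝ => (-s) ^ m) = fun s : ℝ => (fun y : ℝ => y ^ m) (-s) from rfl,
      intervalIntegral.integral_comp_neg (fun s : ℝ => s ^ m), integral_pow]
    rw [abs_of_nonpos hx.le]
    ring

lemma iterI_cont_bound {B : ℝ → A} (hB : Continuous B) {C : ℝ}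
    (hbd : ∀ x, ‖B x‖ ≤ C) (m : ℕ) :
    Continuous (iterI B m) ∧
      ∀ x : ℝ, ‖iterI B m x‖ ≤ ‖(1:A)‖ * (C ^ m * |x| ^ m / m.factorial) := by
  have hC : 0 ≤ C := (norm_nonneg _).trans (hbd 0)
  induction m with
  | zero =>
    refine ⟨continuous_const, fun x => ?_⟩
    simp [iterI]
  | succ m ih =>
    obtain ⟨ihc, ihb⟩ := ih
    have hcont : Continuous fun s => iterI B m s * B s := ihc.mul hB
    have hderiv : ∀ b : ℝ, HasDerivAt (iterI B (m + 1)) (iterI B m b * B b) b := fun b =>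
      (hcont.integral_hasStrictDerivAt 0 b).hasDerivAt
    refine ⟨continuous_iff_continuousAt.2 fun x => (hderiv x).differentiableAt.continuousAt,
      fun x => ?_⟩
    have key : ‖iterI B (m + 1) x‖ ≤
        |∫ s in (0:ℝ)..x, (‖(1:A)‖ * (C ^ m / m.factorial) * C) * |s| ^ m| := by
      refine intervalIntegral.norm_integral_le_abs_of_norm_le ?_ ?_
      · refine Filter.Eventually.of_forall fun s => ?_
        calc ‖iterI B m s * B s‖ ≤ ‖iterI B m s‖ * ‖B s‖ := norm_mul_le _ _
          _ ≤ (‖(1:A)‖ * (C ^ m * |s| ^ m / m.factorial)) * C := by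
              apply mul_le_mul (ihb s) (hbd s) (norm_nonneg _)
              positivity
          _ = (‖(1:A)‖ * (C ^ m / m.factorial) * C) * |s| ^ m := by ring
      · exact (continuous_const.mul ((continuous_abs).pow m)).intervalIntegrable _ _
    rw [intervalIntegral.integral_const_mul, integral_abs_pow] at key
    refine key.trans (le_of_eq ?_)
    have hm : (m.factorial : ℝ) ≠ 0 := Nat.cast_ne_zero.2 m.factorial_ne_zero
    rw [abs_mul, abs_of_nonneg (show (0:ℝ) ≤ ‖(1:A)‖ * (C ^ m / m.factorial) * C by positivity),
      abs_div, abs_mul, abs_pow, abs_abs,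
      abs_of_nonneg (show (0:ℝ) ≤ (m:ℝ) + 1 by positivity), Nat.factorial_succ]
    push_cast
    field_simp
    ring


lemma iterI_congr {B B' : ℝ → A} (h : ∀ s ∈ Icc (0:ℝ) 1, B s = B' s) (m : ℕ) :
    ∀ t ∈ Icc (0:ℝ) 1, iterI B m t = iterI B' m t := by
  induction m with
  | zero => intro t _; rfl
  | succ m ih =>
    intro t ht
    show (∫ s in (0:ℝ)..t, iterI B m s * B s) = ∫ s in (0:ℝ)..t, iterI B' m s * B' s
    refine intervalIntegral.integral_congr fun s hs => ?_
    rw [uIcc_of_le ht.1] at hs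
    have hs1 : s ∈ Icc (0:ℝ) 1 := ⟨hs.1, hs.2.trans ht.2⟩
    rw [ih s hs1, h s hs1]

theorem dyson_series_solves_transport (B : ℝ → A) (hB : ContinuousOn B (Icc 0 1)) :
    (∀ t ∈ Icc (0:ℝ) 1, Summable fun m : ℕ => ‖iterI B m t‖) ∧
    (∑' m : ℕ, iterI B m 0) = 1 ∧
    ∀ t ∈ Icc (0:ℝ) 1,
      HasDerivWithinAt (fun u : ℝ => ∑' m : ℕ, iterI B m u)
        ((∑' m : ℕ, iterI B m t) * B t) (Icc 0 1) t := by
  -- extend `B` continuously to all of `ℝ`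
  set B' : ℝ → A := IccExtend zero_le_one ((Icc (0:ℝ) 1).restrict B) with hB'def
  have hB'cont : Continuous B' := hB.restrict.Icc_extend'
  have hEq : ∀ s ∈ Icc (0:ℝ) 1, B s = B' s := fun s hs => by
    rw [hB'def, IccExtend_of_mem _ _ hs]; rfl
  obtain ⟨C, hCbd⟩ := isCompact_Icc.exists_bound_of_continuousOn hB
  have hbd : ∀ x, ‖B' x‖ ≤ C := fun x => by
    rw [hB'def]
    exact hCbd _ (projIcc 0 1 zero_le_one x).2
  have hC : 0 ≤ C := (norm_nonneg _).trans (hbd 0)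
  set K := ‖(1:A)‖ with hK
  have hK0 : 0 ≤ K := norm_nonneg _
  have hprops := iterI_cont_bound hB'cont hbd (A := A)
  -- uniform bound on `Ioo (-2) 2`
  set u : ℕ → ℝ := fun m => K * (C ^ m * 2 ^ m / m.factorial) with hu_def
  have hu : Summable u := by
    refine ((Real.summable_pow_div_factorial (2 * C)).mul_left K).congr fun m => ?_
    rw [hu_def, mul_pow]; ring
  have hIbd : ∀ m : ℕ, ∀ x : ℝ, |x| ≤ 2 → ‖iterI B' m x‖ ≤ u m := by
    intro m x hx
    refine ((hprops m).2 x).trans ?_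
    simp only [hu_def]
    gcongr
  have hIoo_abs : ∀ x ∈ Ioo (-2:ℝ) 2, |x| ≤ 2 := fun x hx =>
    (abs_lt.2 ⟨hx.1, hx.2⟩).le
  have hIccIoo : Icc (0:ℝ) 1 ⊆ Ioo (-2:ℝ) 2 := fun x hx =>
    ⟨by linarith [hx.1], by linarith [hx.2]⟩
  have hEqIter := iterI_congr hEq
  -- summability of the series (with `B'`, hence also with `B`)
  have hsum' : ∀ x : ℝ, |x| ≤ 2 → Summable fun m : ℕ => ‖iterI B' m x‖ := fun x hx =>
    Summable.of_nonneg_of_le (fun m => norm_nonneg _) (fun m => hIbd m x hx) hu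
  have hsumB : ∀ t ∈ Icc (0:ℝ) 1, Summable fun m : ℕ => ‖iterI B m t‖ := by
    intro t ht
    refine ((hsum' t (hIoo_abs t (hIccIoo ht))).congr fun m => ?_)
    rw [hEqIter m t ht]
  refine ⟨hsumB, ?_, ?_⟩
  · -- value at 0
    rw [tsum_eq_single 0 ?_]
    · rfl
    · intro m hm
      match m, hm with
      | (m + 1), _ =>
        show (∫ s in (0:ℝ)..(0:ℝ), iterI B m s * B s) = 0
        exact intervalIntegral.integral_same
  · -- the derivative
    intro t ht
    -- derivatives of each term
    have hd : ∀ (m : ℕ) (x : ℝ), HasDerivAt (iterI B' m) (dIter B' m x) x := by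
      intro m x
      match m with
      | 0 => exact hasDerivAt_const x 1
      | (m + 1) =>
        exact (((hprops m).1.mul hB'cont).integral_hasStrictDerivAt 0 x).hasDerivAt
    -- bound on the derivative series
    have hdbd : ∀ (m : ℕ), ∀ x ∈ Ioo (-2:ℝ) 2, ‖dIter B' m x‖ ≤ dBound K C m := by
      intro m x hx
      match m with
      | 0 => simp [dIter, dBound]
      | (m + 1) =>
        show ‖iterI B' m x * B' x‖ ≤ K * (C ^ m * 2 ^ m / m.factorial) * C
        calc ‖iterI B' m x * B' x‖ ≤ ‖iterI B' m x‖ * ‖B' x‖ := norm_mul_le _ _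
          _ ≤ (K * (C ^ m * 2 ^ m / m.factorial)) * C := by
              apply mul_le_mul (hIbd m x (hIoo_abs x hx)) (hbd x) (norm_nonneg _)
              positivity
    have hdB : Summable (dBound K C) := by
      rw [← summable_nat_add_iff 1]
      exact (hu.mul_right C).congr fun m => rfl
    -- uniform convergence of the derivative partial sums
    have hf' : TendstoUniformlyOn
        (fun (n : ℕ) (x : ℝ) => ∑ m ∈ Finset.range n, dIter B' m x)
        (fun x => ∑' m : ℕ, dIter B' m x) Filter.atTop (Ioo (-2:ℝ) 2) :=
      tendstoUniformlyOn_tsum_nat hdB fun m x hx => hdbd m x hx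
    have hfg : ∀ x ∈ Ioo (-2:ℝ) 2,
        Filter.Tendsto (fun n : ℕ => ∑ m ∈ Finset.range n, iterI B' m x) Filter.atTop
          (nhds (∑' m : ℕ, iterI B' m x)) := fun x hx =>
      ((hsum' x (hIoo_abs x hx)).of_norm).hasSum.tendsto_sum_nat
    have hderivSum : ∀ (n : ℕ), ∀ x ∈ Ioo (-2:ℝ) 2,
        HasDerivAt (fun y => ∑ m ∈ Finset.range n, iterI B' m y)
          (∑ m ∈ Finset.range n, dIter B' m x) x := fun n x _ =>
      HasDerivAt.fun_sum fun m _ => hd m x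
    have ht2 : t ∈ Ioo (-2:ℝ) 2 := hIccIoo ht
    have hmain : HasDerivAt (fun x => ∑' m : ℕ, iterI B' m x)
        (∑' m : ℕ, dIter B' m t) t :=
      hasDerivAt_of_tendstoUniformlyOn isOpen_Ioo hf'
        (Filter.Eventually.of_forall hderivSum) hfg ht2
    -- identify the derivative value
    have hsd : Summable fun m : ℕ => dIter B' m t :=
      Summable.of_norm (Summable.of_nonneg_of_le (fun m => norm_nonneg _)
        (fun m => hdbd m t ht2) hdB)
    have hval : (∑' m : ℕ, dIter B' m t) = (∑' m : ℕ, iterI B' m t) * B' t := by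
      rw [Summable.tsum_eq_zero_add hsd]
      show (0 : A) + (∑' m : ℕ, iterI B' m t * B' t) = _
      rw [zero_add, Summable.tsum_mul_right _ ((hsum' t (hIoo_abs t ht2)).of_norm)]
    rw [hval] at hmain
    -- transfer back to `B`
    have hfun : ∀ y ∈ Icc (0:ℝ) 1,
        (∑' m : ℕ, iterI B m y) = ∑' m : ℕ, iterI B' m y := fun y hy =>
      tsum_congr fun m => hEqIter m y hy
    have h1 : HasDerivWithinAt (fun x => ∑' m : ℕ, iterI B' m x)
        ((∑' m : ℕ, iterI B' m t) * B' t) (Icc 0 1) t := hmain.hasDerivWithinAt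
    have h2 := h1.congr hfun (hfun t ht)
    rw [← hfun t ht, ← hEq t ht] at h2
    exact h2

end ChenPaper
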